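/- Let δ > 0. There exists σ₀ > 0, depending only on δ, such that the following holds. Let X be a δ-hyperbolic metric space in which, for all x,x' ∈ X and every l > 0, there is a (1,l)-quasi-geodesic joining x to x'; let G be a group acting on X by isometries, let σ ≥ σ₀, and let R be a σ-rotation family. Then for every (H,v) ∈ R, every h ∈ H∖{1} and every x ∈ X, one has (x, h·x)_v ≤ 2δ. -/

import Mathlib

open Metric

universe u v

/-- The Gromov product `(y,z)_x = (d(y,x)+d(z,x)-d(y,z))/2`. -/
noncomputable def gp {X : Type u} [MetricSpace X] (x y z : X) : ℝ :=
  (dist y x + dist z x - dist y z) / 2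

/-- `X` is `δ`-hyperbolic: the four point inequality. -/
def IsHyp (X : Type u) [MetricSpace X] (δ : ℝ) : Prop :=
  ∀ x y z t : X, min (gp t x y) (gp t y z) - δ ≤ gp t x z

/-- `γ` restricted to `[a,b]` is a `(1,l)`-quasi-geodesic. -/
def IsQG {X : Type u} [MetricSpace X] (l a b : ℝ) (γ : ℝ → X) : Prop :=
  ∀ t ∈ Set.Icc a b, ∀ t' ∈ Set.Icc a b,
    dist (γ t) (γ t') ≤ |t - t'| ∧ |t - t'| ≤ dist (γ t) (γ t') + l

/-- Any two points of `X` are joined by a `(1,l)`-quasi-geodesic, for every `l > 0`. -/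
def QGSpace (X : Type u) [MetricSpace X] : Prop :=
  ∀ x x' : X, ∀ l : ℝ, 0 < l →
    ∃ a b : ℝ, ∃ γ : ℝ → X, a ≤ b ∧ IsQG l a b γ ∧ γ a = x ∧ γ b = x'

/-- `Y` is `α`-quasi-convex. -/
def QConvex {X : Type u} [MetricSpace X] (α : ℝ) (Y : Set X) : Prop :=
  ∀ x : X, ∀ y ∈ Y, ∀ y' ∈ Y, infDist x Y ≤ gp x y y' + α

/-- The hull of `Y`: the union of the images of all `(1,δ)`-quasi-geodesics defined on
compact intervals whose two endpoints lie in `Y`. -/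
def hull {X : Type u} [MetricSpace X] (δ : ℝ) (Y : Set X) : Set X :=
  { z | ∃ a b : ℝ, ∃ γ : ℝ → X, a ≤ b ∧ IsQG δ a b γ ∧ γ a ∈ Y ∧ γ b ∈ Y ∧
      z ∈ γ '' Set.Icc a b }

/-- The `r`-neighborhood of a subset. -/
def nbhd {X : Type u} [MetricSpace X] (r : ℝ) (Z : Set X) : Set X :=
  { x | infDist x Z ≤ r }

/-- A `σ`-rotation family: a nonempty set of pairs (rotation subgroup, apex). -/
def IsRotFam {X : Type u} [MetricSpace X] {G : Type v} [Group G] [MulAction G X]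
    (σ : ℝ) (R : Set (Subgroup G × X)) : Prop :=
  R.Nonempty ∧
  (∀ p ∈ R, ∀ x : X, dist x p.2 ≤ σ / 10 → ∀ h ∈ p.1, h ≠ 1 →
      dist (h • x) x = 2 * dist p.2 x) ∧
  (∀ p ∈ R, ∀ q ∈ R, p ≠ q → σ ≤ dist p.2 q.2) ∧
  (∀ g : G, ∀ p ∈ R, (Subgroup.map (MulAut.conj g).toMonoidHom p.1, g • p.2) ∈ R)

/-- The set of apices of a rotation family. -/
def apices {G : Type v} {X : Type u} [Group G] (R : Set (Subgroup G × X)) : Set X :=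
  Prod.snd '' R

/-- The subgroup `K_Y` generated by all rotation subgroups whose apex lies in `Y`. -/
def rotSub {G : Type v} {X : Type u} [Group G] (R : Set (Subgroup G × X)) (Y : Set X) :
    Subgroup G :=
  ⨆ p ∈ { q ∈ R | q.2 ∈ Y }, p.1

/-- The orbit set `P • Z`. -/
def orbSet {G : Type v} {X : Type u} [Group G] [MulAction G X] (P : Subgroup G)
    (Z : Set X) : Set X :=
  { x | ∃ g ∈ P, ∃ z ∈ Z, x = g • z }

/-- An extended windmill `(W, N, V)` for the rotation family `R`. -/
def IsExtWindmill {X : Type u} [MetricSpace X] {G : Type v} [Group G] [MulAction G X]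
    (δ : ℝ) (R : Set (Subgroup G × X)) (W : Set X) (N : Subgroup G) (V : Set X) : Prop :=
  V ⊆ apices R ∧
  QConvex (2 * δ) W ∧
  (∀ g ∈ N ⊔ rotSub R V, ∀ w ∈ W, g • w ∈ W) ∧
  (∀ g ∈ N ⊔ rotSub R V, ∀ v ∈ V, g • v ∈ V) ∧
  (∀ p ∈ R, p.2 ∉ V → ∀ h ∈ p.1, h ≠ 1 → ∀ x ∈ W, ∀ x' ∈ W,
      gp p.2 x (h • x') ≤ 100 * δ) ∧
  (∀ p ∈ R, p.2 ∉ V → ∀ g ∈ N ⊔ rotSub R V, g • p.2 = p.2 → g = 1)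

/-- Small Gromov product at the apex of a rotation family. -/
theorem rotation_family_small_product_at_apex (δ : ℝ) (hδ : 0 < δ) :
    ∃ σ₀ : ℝ, 0 < σ₀ ∧
      ∀ (X : Type u) [MetricSpace X] (G : Type v) [Group G] [MulAction G X],
        (∀ g : G, Isometry fun x : X => g • x) →
        IsHyp X δ → QGSpace X →
        ∀ σ : ℝ, σ₀ ≤ σ → ∀ R : Set (Subgroup G × X), IsRotFam σ R →
          ∀ p ∈ R, ∀ h ∈ p.1, h ≠ 1 → ∀ x : X, gp p.2 x (h • x) ≤ 2 * δ := by
  refine ⟨100 * δ, by linarith, ?_⟩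
  intro X _ G _ _ hiso hhyp hqgs σ hσ R hR p hp h hh hh1 x
  obtain ⟨-, hR1, -, -⟩ := hR
  have hσpos : 0 < σ := by linarith
  have hdist : ∀ a b : X, dist (h • a) (h • b) = dist a b := fun a b => (hiso h).dist_eq a b
  set v := p.2 with hv
  have hfix : h • v = v := by
    have h0 : dist (h • v) v = 2 * dist v v := hR1 p hp v (by simp [hv]; linarith) h hh hh1
    simpa using h0
  have hdv : ∀ a : X, dist (h • a) v = dist a v := by
    intro a; nth_rewrite 1 [← hfix]; rw [hdist]
  have gpinv : ∀ a b : X, gp v (h • a) (h • b) = gp v a b := by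
    intro a b; unfold gp; rw [hdv, hdv, hdist]
  have gpcomm : ∀ a b : X, gp v a b = gp v b a := by
    intro a b; unfold gp; rw [dist_comm a b]; ring
  by_cases hcase : dist x v ≤ σ / 10
  · have h2 : dist (h • x) x = 2 * dist v x := hR1 p hp x hcase h hh hh1
    have h3 : dist (h • x) v = dist x v := hdv x
    have h4 : dist x (h • x) = 2 * dist v x := by rw [dist_comm]; exact h2
    have h5 : dist v x = dist x v := dist_comm v x
    unfold gp
    rw [h3, h4, h5]
    linarith
  · push_neg at hcase
    obtain ⟨a, b, γ, hab, hqg, hγa, hγb⟩ := hqgs v x δ hδ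
    set t := a + σ / 10 with ht
    have hta : a ≤ t := by simp only [ht]; linarith
    have hba : dist v x ≤ b - a := by
      have h1 := (hqg a ⟨le_refl a, hab⟩ b ⟨hab, le_refl b⟩).1
      rw [hγa, hγb, abs_sub_comm, abs_of_nonneg (by linarith)] at h1
      exact h1
    have htb : t ≤ b := by
      have : dist x v = dist v x := dist_comm x v
      simp only [ht]; linarith
    set y := γ t with hy
    have hmemt : t ∈ Set.Icc a b := ⟨hta, htb⟩
    have hmema : a ∈ Set.Icc a b := ⟨le_refl a, hab⟩
    have hmemb : b ∈ Set.Icc a b := ⟨hab, le_refl b⟩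
    have habs : |t - a| = σ / 10 := by rw [abs_of_nonneg (by simp only [ht]; linarith : (0:ℝ) ≤ t - a)]; simp only [ht]; ring
    have hya := hqg t hmemt a hmema
    rw [hγa, habs] at hya
    have hyvle : dist y v ≤ σ / 10 := hya.1
    have hyvge : σ / 10 - δ ≤ dist y v := by linarith [hya.2]
    have hxv := (hqg b hmemb a hmema).2
    rw [hγa, hγb, abs_of_nonneg (by linarith : (0:ℝ) ≤ b - a)] at hxv
    have hxy := (hqg b hmemb t hmemt).1
    rw [hγb, abs_of_nonneg (by linarith : (0:ℝ) ≤ b - t)] at hxy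
    -- gp v x y is large
    have hgpxy : 9 * δ ≤ gp v x y := by
      have hxy' : dist x y ≤ b - (a + σ / 10) := by rw [ht] at hxy; exact hxy
      unfold gp
      linarith [hxv, hyvge, hxy', hσ]
    -- gp v y (h • y) = 0
    have hyy : dist (h • y) y = 2 * dist v y := hR1 p hp y hyvle h hh hh1
    have hgpy0 : gp v y (h • y) = 0 := by
      unfold gp
      rw [hdv, dist_comm y (h • y), hyy, dist_comm v y]
      ring
    have A := hhyp y x (h • y) v
    have B := hhyp x (h • x) (h • y) v
    rw [hgpy0] at A
    have hgpyx : 9 * δ ≤ gp v y x := by rw [gpcomm]; exact hgpxy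
    have hminA : min (gp v y x) (gp v x (h • y)) ≤ δ := by linarith
    have hxhy : gp v x (h • y) ≤ δ := by
      rcases min_le_iff.mp hminA with h' | h'
      · linarith
      · exact h'
    have hgphxy : 9 * δ ≤ gp v (h • x) (h • y) := by rw [gpinv]; exact hgpxy
    have hminB : min (gp v x (h • x)) (gp v (h • x) (h • y)) ≤ 2 * δ := by linarith
    rcases min_le_iff.mp hminB with h' | h'
    · exact h'
    · linarith
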